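/- Let γ : [0,1] → ℂ be a continuously differentiable path (the contour C) with endpoints A = γ(0), B = γ(1). Let Θ : ℂ → ℂ be holomorphic with derivative K = Θ'. Let F : ℂ × ℂ → ℂ be holomorphic in each variable with continuous derivatives, satisfying F(α,γ) + (1/(2π))·∫_C K(α−β)·F(β,γ) dβ = (1/(2π))·Θ(α−γ) for all α, γ ∈ ℂ, and let R(α,γ) := ∂F/∂γ(α,γ). Assume R satisfies the dual resolvent identity R(α,γ) + (1/(2π))·∫_C R(α,β)·K(β−γ) dβ = −(1/(2π))·K(α−γ) for all α, γ ∈ ℂ. Then for all α, γ ∈ ℂ: ∂F/∂α(α,γ) = −R(α,γ) − R(α,B)·F(B,γ) + R(α,A)·F(A,γ). -/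

import Mathlib

/-- Contour integral of `f` along the path `γ : [0,1] → ℂ`:
`∫_C f(β) dβ := ∫₀¹ f(γ(t)) γ'(t) dt`. -/
noncomputable def cInt (γ : ℝ → ℂ) (f : ℂ → ℂ) : ℂ :=
  ∫ t in (0:ℝ)..1, f (γ t) * deriv γ t

open MeasureTheory intervalIntegral Metric Set

section helpers
lemma my_swap {f : ℝ → ℝ → ℂ} (hf : Continuous fun p : ℝ × ℝ => f p.1 p.2) :
    (∫ s in (0:ℝ)..1, ∫ t in (0:ℝ)..1, f s t) = ∫ t in (0:ℝ)..1, ∫ s in (0:ℝ)..1, f s t := by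
  simp only [intervalIntegral.integral_of_le (zero_le_one (α := ℝ))]
  apply MeasureTheory.integral_integral_swap
  rw [Measure.prod_restrict]
  have : IntegrableOn (Function.uncurry f) (Icc (0:ℝ) 1 ×ˢ Icc (0:ℝ) 1) volume :=
    hf.continuousOn.integrableOn_compact (isCompact_Icc.prod isCompact_Icc)
  exact this.mono_set (Set.prod_mono Ioc_subset_Icc_self Ioc_subset_Icc_self)

lemma hasDerivAt_cInt (γ : ℝ → ℂ) (hγ : ContDiff ℝ 1 γ) (Φ Φ' : ℂ → ℂ → ℂ)
    (hd : ∀ (β x : ℂ), HasDerivAt (fun a => Φ a β) (Φ' x β) x)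
    (hΦc : ∀ a, Continuous (Φ a))
    (hΦ'c : Continuous fun p : ℂ × ℂ => Φ' p.1 p.2) (a₀ : ℂ) :
    HasDerivAt (fun a => cInt γ (Φ a)) (cInt γ (Φ' a₀)) a₀ := by
  unfold cInt
  have hγc : Continuous γ := hγ.continuous
  have hγ' : Continuous (deriv γ) := hγ.continuous_deriv le_rfl
  obtain ⟨M, hM⟩ : ∃ M, ∀ p ∈ (closedBall a₀ 1) ×ˢ (γ '' Icc (0:ℝ) 1),
      ‖(fun p : ℂ × ℂ => Φ' p.1 p.2) p‖ ≤ M :=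
    ((isCompact_closedBall a₀ 1).prod (isCompact_Icc.image hγc)).exists_bound_of_continuousOn
      hΦ'c.continuousOn
  refine (intervalIntegral.hasDerivAt_integral_of_dominated_loc_of_deriv_le
    (F := fun x t => Φ x (γ t) * deriv γ t) (F' := fun x t => Φ' x (γ t) * deriv γ t)
    (bound := fun t => M * ‖deriv γ t‖) (s := ball a₀ 1) (ball_mem_nhds a₀ one_pos) ?_ ?_ ?_ ?_ ?_ ?_).2
  · exact Filter.Eventually.of_forall fun x =>
      (((hΦc x).comp hγc).mul hγ').aestronglyMeasurable
  · exact (((hΦc a₀).comp hγc).mul hγ').intervalIntegrable 0 1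
  · exact ((hΦ'c.comp ((continuous_const.prodMk hγc))).mul hγ').aestronglyMeasurable
  · refine Filter.Eventually.of_forall fun t ht x hx => ?_
    rw [norm_mul]
    have ht' : t ∈ Icc (0:ℝ) 1 := by
      rw [Set.uIoc_of_le (zero_le_one (α := ℝ))] at ht
      exact Ioc_subset_Icc_self ht
    exact mul_le_mul_of_nonneg_right
      (hM (x, γ t) ⟨ball_subset_closedBall hx, Set.mem_image_of_mem γ ht'⟩) (norm_nonneg _)
  · exact (continuous_const.mul hγ'.norm).intervalIntegrable 0 1
  · exact Filter.Eventually.of_forall fun t _ x _ => (hd (γ t) x).mul_const _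
end helpers

/-- for the solution `F` of `(I + (1/2π)K)∗F = (1/2π)Θ` (with `K = Θ'`) and
`R = ∂F/∂γ` satisfying the dual resolvent identity, one has
`∂F/∂α(α,γ) = −R(α,γ) − R(α,B)F(B,γ) + R(α,A)F(A,γ)`. -/
theorem stmt_4 (γ : ℝ → ℂ) (hγ : ContDiff ℝ 1 γ)
    (A B : ℂ) (hA : A = γ 0) (hB : B = γ 1)
    (Θ : ℂ → ℂ) (hΘ : Differentiable ℂ Θ)
    (K : ℂ → ℂ) (hK : K = deriv Θ)
    (F : ℂ → ℂ → ℂ)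
    (hF1 : ∀ g : ℂ, Differentiable ℂ (fun a => F a g))
    (hF2 : ∀ a : ℂ, Differentiable ℂ (fun g => F a g))
    (hFc1 : Continuous fun p : ℂ × ℂ => deriv (fun a => F a p.2) p.1)
    (hFc2 : Continuous fun p : ℂ × ℂ => deriv (fun g => F p.1 g) p.2)
    (R : ℂ → ℂ → ℂ) (hRdef : ∀ a g : ℂ, R a g = deriv (fun g' => F a g') g)
    (hFeq : ∀ a g : ℂ,
      F a g + (1 / (2 * (Real.pi : ℂ))) * cInt γ (fun β => K (a - β) * F β g)
        = (1 / (2 * (Real.pi : ℂ))) * Θ (a - g))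
    (hres : ∀ a g : ℂ,
      R a g + (1 / (2 * (Real.pi : ℂ))) * cInt γ (fun β => R a β * K (β - g))
        = -(1 / (2 * (Real.pi : ℂ))) * K (a - g)) :
    ∀ a g : ℂ, deriv (fun a' => F a' g) a
      = -R a g - R a B * F B g + R a A * F A g := by
  intro a g
  set c : ℂ := 1 / (2 * (Real.pi : ℂ)) with hc
  set u : ℂ → ℂ := deriv (fun x => F x g) with hu
  -- continuity facts
  have hγc : Continuous γ := hγ.continuous
  have hγ'c : Continuous (deriv γ) := hγ.continuous_deriv le_rfl
  have hKd : Differentiable ℂ K := by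
    rw [hK]
    exact (contDiff_infty_iff_deriv.mp (hΘ.contDiff)).2.differentiable (by simp)
  have hKc : Continuous K := hKd.continuous
  have hK'c : Continuous (deriv K) := (hKd.contDiff (n := 1)).continuous_deriv le_rfl
  have huc : Continuous u := hFc1.comp (continuous_id.prodMk continuous_const)
  have hRc : Continuous fun p : ℂ × ℂ => R p.1 p.2 := by
    have h : (fun p : ℂ × ℂ => R p.1 p.2) = fun p : ℂ × ℂ => deriv (fun g' => F p.1 g') p.2 :=
      funext fun p => hRdef p.1 p.2
    rw [h]; exact hFc2
  have hRac : Continuous fun β => R a β := hRc.comp (continuous_const.prodMk continuous_id)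
  have hFg_c : Continuous fun β => F β g := (hF1 g).continuous
  -- Step A : differentiate hFeq in the first variable
  have hA1 : ∀ x : ℂ, u x + c * cInt γ (fun β => deriv K (x - β) * F β g) = c * K (x - g) := by
    intro x
    have d1 : HasDerivAt (fun y => F y g) (u x) x := ((hF1 g) x).hasDerivAt
    have d2 : HasDerivAt (fun y => cInt γ (fun β => K (y - β) * F β g))
        (cInt γ (fun β => deriv K (x - β) * F β g)) x := by
      refine hasDerivAt_cInt γ hγ _ (fun y β => deriv K (y - β) * F β g) ?_ ?_ ?_ x
      · intro β y
        have h1 : HasDerivAt (fun z : ℂ => z - β) 1 y := (hasDerivAt_id y).sub_const β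
        have h2 : HasDerivAt K (deriv K (y - β)) (y - β) := (hKd (y - β)).hasDerivAt
        have h3 := (h2.comp y h1).mul_const (F β g)
        simpa using h3
      · intro y; exact (hKc.comp (continuous_const.sub continuous_id)).mul hFg_c
      · exact (hK'c.comp (continuous_fst.sub continuous_snd)).mul (hFg_c.comp continuous_snd)
    have d3 : HasDerivAt (fun y => c * Θ (y - g)) (c * K (x - g)) x := by
      have h1 : HasDerivAt (fun y : ℂ => y - g) 1 x := (hasDerivAt_id x).sub_const g
      have h2 : HasDerivAt Θ (K (x - g)) (x - g) := by
        rw [hK]; exact (hΘ (x - g)).hasDerivAt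
      have h3 := (h2.comp x h1).const_mul c
      simpa using h3
    have heq : (fun y => F y g + c * cInt γ (fun β => K (y - β) * F β g))
        = fun y => c * Θ (y - g) := funext fun y => hFeq y g
    have dL : HasDerivAt (fun y => F y g + c * cInt γ (fun β => K (y - β) * F β g)) _ x :=
      d1.add (d2.const_mul c)
    rw [heq] at dL
    exact dL.unique d3
  -- Step B : integration by parts
  have hB1 : ∀ x : ℂ, cInt γ (fun β => K (x - β) * u β)
      - cInt γ (fun β => deriv K (x - β) * F β g)
      = K (x - B) * F B g - K (x - A) * F A g := by
    intro x
    have key : ∀ t : ℝ, HasDerivAt (fun s => K (x - γ s) * F (γ s) g)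
        ((K (x - γ t) * u (γ t)) * deriv γ t
          - (deriv K (x - γ t) * F (γ t) g) * deriv γ t) t := by
      intro t
      have hγt : HasDerivAt γ (deriv γ t) t := ((hγ.differentiable one_ne_zero) t).hasDerivAt
      have hin : HasDerivAt (fun s => x - γ s) (-deriv γ t) t := hγt.const_sub x
      have hKcomp : HasDerivAt (fun s => K (x - γ s)) ((-deriv γ t) • deriv K (x - γ t)) t :=
        ((hKd (x - γ t)).hasDerivAt).scomp t hin
      have hFcomp : HasDerivAt (fun s => F (γ s) g) ((deriv γ t) • u (γ t)) t :=
        (((hF1 g) (γ t)).hasDerivAt).scomp t hγt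
      have h3 : HasDerivAt (fun s => K (x - γ s) * F (γ s) g) _ t := hKcomp.mul hFcomp
      convert h3 using 1
      simp only [smul_eq_mul]; ring
    have hcont : Continuous fun t => (K (x - γ t) * u (γ t)) * deriv γ t
        - (deriv K (x - γ t) * F (γ t) g) * deriv γ t := by
      apply Continuous.sub
      · exact ((hKc.comp (continuous_const.sub hγc)).mul (huc.comp hγc)).mul hγ'c
      · exact ((hK'c.comp (continuous_const.sub hγc)).mul (hFg_c.comp hγc)).mul hγ'c
    have ftc := intervalIntegral.integral_eq_sub_of_hasDerivAt
      (fun t _ => key t) (hcont.intervalIntegrable 0 1)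
    have hsplit : (∫ t in (0:ℝ)..1, ((K (x - γ t) * u (γ t)) * deriv γ t
          - (deriv K (x - γ t) * F (γ t) g) * deriv γ t))
        = cInt γ (fun β => K (x - β) * u β) - cInt γ (fun β => deriv K (x - β) * F β g) := by
      simp only [cInt]
      rw [intervalIntegral.integral_sub]
      · exact (((hKc.comp (continuous_const.sub hγc)).mul (huc.comp hγc)).mul
          hγ'c).intervalIntegrable 0 1
      · exact (((hK'c.comp (continuous_const.sub hγc)).mul (hFg_c.comp hγc)).mul
          hγ'c).intervalIntegrable 0 1
    rw [hsplit] at ftc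
    rw [ftc, hA, hB]
  -- Combined equation S1
  have hS1 : ∀ x : ℂ, u x + c * cInt γ (fun β => K (x - β) * u β)
      = c * K (x - g) + c * K (x - B) * F B g - c * K (x - A) * F A g := by
    intro x
    linear_combination hA1 x + c * hB1 x
  -- S2 : the resolvent identity rearranged
  have hS2 : ∀ x : ℂ, c * cInt γ (fun β => R a β * K (β - x)) = -(c * K (a - x)) - R a x := by
    intro x; linear_combination hres a x
  -- Fubini setup
  set W : ℝ → ℂ := fun s => cInt γ (fun β => K (γ s - β) * u β) with hW
  have hWc : Continuous W := by
    apply intervalIntegral.continuous_parametric_intervalIntegral_of_continuous'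
      (f := fun s t => K (γ s - γ t) * u (γ t) * deriv γ t)
    exact ((hKc.comp ((hγc.comp continuous_fst).sub (hγc.comp continuous_snd))).mul
      ((huc.comp hγc).comp continuous_snd)).mul (hγ'c.comp continuous_snd)
  set f : ℝ → ℝ → ℂ :=
    fun s t => R a (γ s) * deriv γ s * (K (γ s - γ t) * u (γ t) * deriv γ t) with hf
  have hfc : Continuous fun p : ℝ × ℝ => f p.1 p.2 := by
    apply Continuous.mul
    · exact ((hRac.comp hγc).comp continuous_fst).mul (hγ'c.comp continuous_fst)
    · exact ((hKc.comp ((hγc.comp continuous_fst).sub (hγc.comp continuous_snd))).mul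
        ((huc.comp hγc).comp continuous_snd)).mul (hγ'c.comp continuous_snd)
  have step1 : ∀ s : ℝ, (∫ t in (0:ℝ)..1, f s t) = R a (γ s) * deriv γ s * W s := by
    intro s
    rw [hf, hW]
    simp only [cInt]
    rw [intervalIntegral.integral_const_mul]
  have step2 : ∀ t : ℝ, (∫ s in (0:ℝ)..1, f s t)
      = cInt γ (fun β => R a β * K (β - γ t)) * (u (γ t) * deriv γ t) := by
    intro t
    have h1 : ∀ s : ℝ, f s t
        = ((R a (γ s) * K (γ s - γ t)) * deriv γ s) * (u (γ t) * deriv γ t) := fun s => by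
      rw [hf]; ring
    rw [intervalIntegral.integral_congr (fun s _ => h1 s),
      intervalIntegral.integral_mul_const]
    simp only [cInt]
  have hkey : (∫ s in (0:ℝ)..1, R a (γ s) * deriv γ s * W s)
      = ∫ t in (0:ℝ)..1, cInt γ (fun β => R a β * K (β - γ t)) * (u (γ t) * deriv γ t) := by
    rw [intervalIntegral.integral_congr (fun s _ => (step1 s).symm), my_swap hfc]
    exact intervalIntegral.integral_congr (fun t _ => step2 t)
  -- J computation
  have hsub : ∀ s : ℝ, (R a (γ s) * u (γ s)) * deriv γ s
      = (R a (γ s) * (c * K (γ s - g) + c * K (γ s - B) * F B g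
          - c * K (γ s - A) * F A g)) * deriv γ s
        - c * (R a (γ s) * deriv γ s * W s) := by
    intro s
    have h : u (γ s) + c * W s
        = c * K (γ s - g) + c * K (γ s - B) * F B g - c * K (γ s - A) * F A g := hS1 (γ s)
    linear_combination (R a (γ s) * deriv γ s) * h
  have hJ : cInt γ (fun β => R a β * u β)
      = cInt γ (fun β => R a β * (c * K (β - g) + c * K (β - B) * F B g
          - c * K (β - A) * F A g))
        - c * ∫ s in (0:ℝ)..1, R a (γ s) * deriv γ s * W s := by
    simp only [cInt]
    rw [← intervalIntegral.integral_const_mul, ← intervalIntegral.integral_sub]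
    · exact intervalIntegral.integral_congr fun s _ => hsub s
    · apply Continuous.intervalIntegrable
      apply Continuous.mul _ hγ'c
      apply (hRac.comp hγc).mul
      fun_prop
    · apply Continuous.intervalIntegrable
      exact continuous_const.mul (((hRac.comp hγc).mul hγ'c).mul hWc)
  have hL : c * ∫ t in (0:ℝ)..1, cInt γ (fun β => R a β * K (β - γ t)) * (u (γ t) * deriv γ t)
      = -(c * cInt γ (fun β => K (a - β) * u β)) - cInt γ (fun β => R a β * u β) := by
    have hrw : ∀ t : ℝ, c * (cInt γ (fun β => R a β * K (β - γ t)) * (u (γ t) * deriv γ t))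
        = -((c * (K (a - γ t) * u (γ t))) * deriv γ t) - (R a (γ t) * u (γ t)) * deriv γ t := by
      intro t
      linear_combination (u (γ t) * deriv γ t) * hS2 (γ t)
    rw [← intervalIntegral.integral_const_mul,
      intervalIntegral.integral_congr (fun t _ => hrw t)]
    rw [intervalIntegral.integral_sub, intervalIntegral.integral_neg]
    · simp only [cInt]
      rw [← intervalIntegral.integral_const_mul]
      congr 1
      · congr 1
        exact intervalIntegral.integral_congr fun t _ => by ring
    · apply Continuous.intervalIntegrable
      exact ((continuous_const.mul ((hKc.comp (continuous_const.sub hγc)).mul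
        (huc.comp hγc))).mul hγ'c).neg
    · exact (((hRac.comp hγc).mul (huc.comp hγc)).mul hγ'c).intervalIntegrable 0 1
  -- expand cInt (R * h)
  have hexp : cInt γ (fun β => R a β * (c * K (β - g) + c * K (β - B) * F B g
        - c * K (β - A) * F A g))
      = c * cInt γ (fun β => R a β * K (β - g))
        + (c * cInt γ (fun β => R a β * K (β - B))) * F B g
        - (c * cInt γ (fun β => R a β * K (β - A))) * F A g := by
    have h1 : ∀ t : ℝ, ((fun β => R a β * (c * K (β - g) + c * K (β - B) * F B g
          - c * K (β - A) * F A g)) (γ t)) * deriv γ t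
        = c * ((R a (γ t) * K (γ t - g)) * deriv γ t)
          + (c * ((R a (γ t) * K (γ t - B)) * deriv γ t)) * F B g
          - (c * ((R a (γ t) * K (γ t - A)) * deriv γ t)) * F A g := fun t => by ring
    simp only [cInt]
    rw [intervalIntegral.integral_congr (fun t _ => h1 t)]
    have i1 : IntervalIntegrable (fun t => c * ((R a (γ t) * K (γ t - g)) * deriv γ t))
        volume 0 1 := by
      apply Continuous.intervalIntegrable; fun_prop
    have i2 : IntervalIntegrable
        (fun t => (c * ((R a (γ t) * K (γ t - B)) * deriv γ t)) * F B g) volume 0 1 := by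
      apply Continuous.intervalIntegrable; fun_prop
    have i3 : IntervalIntegrable
        (fun t => (c * ((R a (γ t) * K (γ t - A)) * deriv γ t)) * F A g) volume 0 1 := by
      apply Continuous.intervalIntegrable; fun_prop
    rw [intervalIntegral.integral_sub (i1.add i2) i3, intervalIntegral.integral_add i1 i2,
      intervalIntegral.integral_const_mul, intervalIntegral.integral_mul_const,
      intervalIntegral.integral_const_mul, intervalIntegral.integral_mul_const,
      intervalIntegral.integral_const_mul]
  -- final assembly
  have hfinal : u a = (c * K (a - g) + c * K (a - B) * F B g - c * K (a - A) * F A g)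
      + cInt γ (fun β => R a β * (c * K (β - g) + c * K (β - B) * F B g
          - c * K (β - A) * F A g)) := by
    have h1 := hS1 a
    have h2 := hJ
    rw [hkey, hL] at h2
    linear_combination h1 + h2
  rw [hexp, hS2 g, hS2 B, hS2 A] at hfinal
  show u a = _
  rw [hfinal]
  ring
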